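/- Let K ≥ 1 and let a, b : Fin K → ℝ. For w : ℝ define the softmax vector p(w) : Fin K → ℝ by p(w)(k) = exp(a k + w * b k) / ∑_j exp(a j + w * b j). Suppose kmax : Fin K satisfies b k ≤ b kmax for all k, and there exists k with b k < b kmax. Then for every w : ℝ, the derivative of the function w ↦ p(w)(kmax) at w is strictly positive. -/

import Mathlib

open Real Finset

theorem softmax_kmax_deriv_pos
    (K : ℕ) (hK : 1 ≤ K) (a b : Fin K → ℝ)
    (kmax : Fin K) (hmax : ∀ k, b k ≤ b kmax)
    (hne : ∃ k, b k < b kmax) :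
    ∀ w : ℝ, 0 < deriv (fun w : ℝ =>
      Real.exp (a kmax + w * b kmax) / ∑ j, Real.exp (a j + w * b j)) w := by
  intro w
  have hterm : ∀ j : Fin K, HasDerivAt (fun w : ℝ => Real.exp (a j + w * b j))
      (b j * Real.exp (a j + w * b j)) w := by
    intro j
    have h1 : HasDerivAt (fun w : ℝ => a j + w * b j) (b j) w := by
      simpa using ((hasDerivAt_id w).mul_const (b j)).const_add (a j)
    simpa [mul_comm] using h1.exp
  set N : ℝ := Real.exp (a kmax + w * b kmax) with hN
  set D : ℝ := ∑ j, Real.exp (a j + w * b j) with hD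
  set D' : ℝ := ∑ j, b j * Real.exp (a j + w * b j) with hD'
  have hDpos : 0 < D := by
    apply Finset.sum_pos (fun j _ => Real.exp_pos _)
    exact Finset.univ_nonempty_iff.mpr ⟨⟨0, hK⟩⟩
  have hDsum : HasDerivAt (fun w : ℝ => ∑ j, Real.exp (a j + w * b j)) D' w :=
    HasDerivAt.fun_sum (fun j _ => hterm j)
  have hdiv : HasDerivAt (fun w : ℝ =>
      Real.exp (a kmax + w * b kmax) / ∑ j, Real.exp (a j + w * b j))
      ((b kmax * N * D - N * D') / D ^ 2) w :=
    (hterm kmax).div hDsum (ne_of_gt hDpos)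
  rw [hdiv.deriv]
  apply div_pos _ (pow_pos hDpos 2)
  have hlt : D' < b kmax * D := by
    rw [hD', hD, Finset.mul_sum]
    apply Finset.sum_lt_sum
    · intro j _
      exact mul_le_mul_of_nonneg_right (hmax j) (Real.exp_pos _).le
    · obtain ⟨k, hk⟩ := hne
      exact ⟨k, Finset.mem_univ k, by
        exact mul_lt_mul_of_pos_right hk (Real.exp_pos _)⟩
  have hNpos : 0 < N := Real.exp_pos _
  nlinarith
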